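/- Let X, X' be i.i.d. with law P and Y, Y' be i.i.d. with law Q on ℝ^d, all integrable (finite E‖X‖ and E‖Y‖) and with (X, X', Y, Y') mutually independent. Then the energy distance E(P,Q) = 2E‖X - Y‖ - E‖X - X'‖ - E‖Y - Y'‖ is nonnegative. -/

import Mathlib

open MeasureTheory

/-- The energy distance `E(P,Q) = 2E‖X-Y‖ - E‖X-X'‖ - E‖Y-Y'‖` of two probability measures
on `ℝ^d`, where the expectations over independent samples are written as iterated integrals. -/
noncomputable def energyDist {d : ℕ} (P Q : Measure (EuclideanSpace ℝ (Fin d))) : ℝ :=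
  2 * ∫ x, ∫ y, ‖x - y‖ ∂Q ∂P
    - ∫ x, ∫ x', ‖x - x'‖ ∂P ∂P
    - ∫ y, ∫ y', ‖y - y'‖ ∂Q ∂Q

open Set
open scoped RealInnerProductSpace ENNReal

-- ENNReal key inequality
lemma key_ineq_aux {a b : ℝ≥0∞} (hb : b ≤ 1) (hab : a ≤ b) :
    a * (1 - a) + b * (1 - b) ≤ a * (1 - b) + b * (1 - a) := by
  have h1 : (1:ℝ≥0∞) - b + (b - a) = 1 - a := tsub_add_tsub_cancel hb hab
  calc a * (1 - a) + b * (1 - b) = a * (1 - b) + a * (b - a) + b * (1 - b) := by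
        rw [← h1, mul_add]
    _ ≤ a * (1 - b) + b * (b - a) + b * (1 - b) := by
        gcongr
    _ = a * (1 - b) + b * (1 - a) := by rw [← h1, mul_add]; ring

lemma key_ineq {a b : ℝ≥0∞} (ha : a ≤ 1) (hb : b ≤ 1) :
    a * (1 - a) + b * (1 - b) ≤ a * (1 - b) + b * (1 - a) := by
  rcases le_total a b with h | h
  · exact key_ineq_aux hb h
  · rw [add_comm (a * (1-a)), add_comm (a * (1-b))]
    exact key_ineq_aux ha h

lemma ofReal_abs_decomp (x y : ℝ) :
    ENNReal.ofReal (x - y) + ENNReal.ofReal (y - x) = ENNReal.ofReal |x - y| := by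
  rcases le_total x y with h | h
  · rw [ENNReal.ofReal_of_nonpos (by linarith), abs_sub_comm, abs_of_nonneg (by linarith), zero_add]
  · rw [ENNReal.ofReal_of_nonpos (show y - x ≤ 0 by linarith), abs_of_nonneg (by linarith), add_zero]

-- integrability of ‖p.1 - p.2‖ on products
lemma integrable_norm_sub_prod {E : Type*} [NormedAddCommGroup E] [MeasurableSpace E]
    [OpensMeasurableSpace E] [SecondCountableTopology E] (μ ν : Measure E)
    [IsProbabilityMeasure μ] [IsProbabilityMeasure ν]
    (hμ : Integrable (fun x => ‖x‖) μ) (hν : Integrable (fun x => ‖x‖) ν) :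
    Integrable (fun p : E × E => ‖p.1 - p.2‖) (μ.prod ν) := by
  have h1 : Integrable (fun p : E × E => ‖p.1‖) (μ.prod ν) := by
    have hm : Integrable (fun x : E => ‖x‖) (Measure.map Prod.fst (μ.prod ν)) := by
      rwa [Measure.map_fst_prod, measure_univ, one_smul]
    exact (integrable_map_measure continuous_norm.aestronglyMeasurable
      measurable_fst.aemeasurable).mp hm
  have h2 : Integrable (fun p : E × E => ‖p.2‖) (μ.prod ν) := by
    have hm : Integrable (fun x : E => ‖x‖) (Measure.map Prod.snd (μ.prod ν)) := by
      rwa [Measure.map_snd_prod, measure_univ, one_smul]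
    exact (integrable_map_measure continuous_norm.aestronglyMeasurable
      measurable_snd.aemeasurable).mp hm
  refine (h1.add h2).mono' ((continuous_fst.sub continuous_snd).norm.aestronglyMeasurable) ?_
  filter_upwards with p
  simp only [norm_norm, Pi.add_apply]
  exact norm_sub_le _ _

-- the t-integral of the pair of indicators
lemma lintegral_indicator_pair (a b : ℝ) :
    ∫⁻ t : ℝ, ((Ioi t ×ˢ Iic t).indicator (1 : ℝ × ℝ → ℝ≥0∞) (a, b)
      + (Iic t ×ˢ Ioi t).indicator (1 : ℝ × ℝ → ℝ≥0∞) (a, b)) = ENNReal.ofReal |a - b| := by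
  have h1 : ∀ t : ℝ, (Ioi t ×ˢ Iic t).indicator (1 : ℝ × ℝ → ℝ≥0∞) (a, b)
      = (Ico b a).indicator (1 : ℝ → ℝ≥0∞) t := by
    intro t
    simp only [Set.indicator_apply, Set.mem_prod, Set.mem_Ioi, Set.mem_Iic, Set.mem_Ico]
    exact if_congr (by tauto) rfl rfl
  have h2 : ∀ t : ℝ, (Iic t ×ˢ Ioi t).indicator (1 : ℝ × ℝ → ℝ≥0∞) (a, b)
      = (Ico a b).indicator (1 : ℝ → ℝ≥0∞) t := by
    intro t
    simp only [Set.indicator_apply, Set.mem_prod, Set.mem_Ioi, Set.mem_Iic, Set.mem_Ico]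
    exact if_congr (by tauto) rfl rfl
  simp only [h1, h2]
  rw [lintegral_add_left (measurable_one.indicator measurableSet_Ico),
    lintegral_indicator_one measurableSet_Ico, lintegral_indicator_one measurableSet_Ico,
    Real.volume_Ico, Real.volume_Ico, ofReal_abs_decomp]

lemma lintegral_abs_sub_prod (μ ν : Measure ℝ) [IsProbabilityMeasure μ] [IsProbabilityMeasure ν] :
    ∫⁻ p : ℝ × ℝ, ENNReal.ofReal |p.1 - p.2| ∂(μ.prod ν)
      = ∫⁻ t : ℝ, (μ (Ioi t) * ν (Iic t) + μ (Iic t) * ν (Ioi t)) := by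
  have hswap : ∫⁻ p : ℝ × ℝ, ∫⁻ t : ℝ, ((Ioi t ×ˢ Iic t).indicator (1 : ℝ × ℝ → ℝ≥0∞) p
        + (Iic t ×ˢ Ioi t).indicator (1 : ℝ × ℝ → ℝ≥0∞) p) ∂(volume) ∂(μ.prod ν)
      = ∫⁻ t : ℝ, ∫⁻ p : ℝ × ℝ, ((Ioi t ×ˢ Iic t).indicator (1 : ℝ × ℝ → ℝ≥0∞) p
        + (Iic t ×ˢ Ioi t).indicator (1 : ℝ × ℝ → ℝ≥0∞) p) ∂(μ.prod ν) ∂(volume) := by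
    apply lintegral_lintegral_swap
    have hs1 : MeasurableSet {q : (ℝ × ℝ) × ℝ | q.2 < q.1.1 ∧ q.1.2 ≤ q.2} :=
      (measurableSet_lt measurable_snd (measurable_fst.comp measurable_fst)).inter
        (measurableSet_le (measurable_snd.comp measurable_fst) measurable_snd)
    have hs2 : MeasurableSet {q : (ℝ × ℝ) × ℝ | q.1.1 ≤ q.2 ∧ q.2 < q.1.2} :=
      (measurableSet_le (measurable_fst.comp measurable_fst) measurable_snd).inter
        (measurableSet_lt measurable_snd (measurable_snd.comp measurable_fst))
    have : (Function.uncurry fun (p : ℝ × ℝ) (t : ℝ) =>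
        ((Ioi t ×ˢ Iic t).indicator (1 : ℝ × ℝ → ℝ≥0∞) p
          + (Iic t ×ˢ Ioi t).indicator (1 : ℝ × ℝ → ℝ≥0∞) p))
        = fun q : (ℝ × ℝ) × ℝ => ({q : (ℝ × ℝ) × ℝ | q.2 < q.1.1 ∧ q.1.2 ≤ q.2}.indicator 1 q
          + {q : (ℝ × ℝ) × ℝ | q.1.1 ≤ q.2 ∧ q.2 < q.1.2}.indicator 1 q) := by
      funext q
      simp only [Function.uncurry, Set.indicator_apply, Set.mem_prod, Set.mem_Ioi, Set.mem_Iic,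
        Set.mem_setOf_eq, Pi.one_apply]
    rw [this]
    exact ((measurable_one.indicator hs1).add (measurable_one.indicator hs2)).aemeasurable
  calc ∫⁻ p : ℝ × ℝ, ENNReal.ofReal |p.1 - p.2| ∂(μ.prod ν)
      = ∫⁻ p : ℝ × ℝ, ∫⁻ t : ℝ, ((Ioi t ×ˢ Iic t).indicator (1 : ℝ × ℝ → ℝ≥0∞) p
        + (Iic t ×ˢ Ioi t).indicator (1 : ℝ × ℝ → ℝ≥0∞) p) ∂(volume) ∂(μ.prod ν) := by
        refine lintegral_congr fun p => ?_
        exact (lintegral_indicator_pair p.1 p.2).symm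
    _ = ∫⁻ t : ℝ, ∫⁻ p : ℝ × ℝ, ((Ioi t ×ˢ Iic t).indicator (1 : ℝ × ℝ → ℝ≥0∞) p
        + (Iic t ×ˢ Ioi t).indicator (1 : ℝ × ℝ → ℝ≥0∞) p) ∂(μ.prod ν) ∂(volume) := hswap
    _ = ∫⁻ t : ℝ, (μ (Ioi t) * ν (Iic t) + μ (Iic t) * ν (Ioi t)) := by
        refine lintegral_congr fun t => ?_
        rw [lintegral_add_left (measurable_one.indicator (measurableSet_Ioi.prod measurableSet_Iic)),
          lintegral_indicator_one (measurableSet_Ioi.prod measurableSet_Iic),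
          lintegral_indicator_one (measurableSet_Iic.prod measurableSet_Ioi),
          Measure.prod_prod, Measure.prod_prod]

lemma oneDim_energy (μ ν : Measure ℝ) [IsProbabilityMeasure μ] [IsProbabilityMeasure ν]
    (hμ : Integrable (fun x => ‖x‖) μ) (hν : Integrable (fun x => ‖x‖) ν) :
    ∫ p : ℝ × ℝ, |p.1 - p.2| ∂(μ.prod μ) + ∫ p : ℝ × ℝ, |p.1 - p.2| ∂(ν.prod ν)
      ≤ 2 * ∫ p : ℝ × ℝ, |p.1 - p.2| ∂(μ.prod ν) := by
  have habs : ∀ (κ₁ κ₂ : Measure ℝ) [IsProbabilityMeasure κ₁] [IsProbabilityMeasure κ₂],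
      Integrable (fun x => ‖x‖) κ₁ → Integrable (fun x => ‖x‖) κ₂ →
      Integrable (fun p : ℝ × ℝ => |p.1 - p.2|) (κ₁.prod κ₂) := by
    intro κ₁ κ₂ _ _ h₁ h₂
    simpa only [Real.norm_eq_abs] using integrable_norm_sub_prod κ₁ κ₂ h₁ h₂
  have hofReal : ∀ (κ₁ κ₂ : Measure ℝ) [IsProbabilityMeasure κ₁] [IsProbabilityMeasure κ₂],
      Integrable (fun x => ‖x‖) κ₁ → Integrable (fun x => ‖x‖) κ₂ →
      ENNReal.ofReal (∫ p : ℝ × ℝ, |p.1 - p.2| ∂(κ₁.prod κ₂))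
        = ∫⁻ t : ℝ, (κ₁ (Ioi t) * κ₂ (Iic t) + κ₁ (Iic t) * κ₂ (Ioi t)) := by
    intro κ₁ κ₂ _ _ h₁ h₂
    rw [ofReal_integral_eq_lintegral_ofReal (habs κ₁ κ₂ h₁ h₂)
      (Filter.Eventually.of_forall fun p => abs_nonneg _), lintegral_abs_sub_prod]
  have hIic : ∀ (κ : Measure ℝ) [IsProbabilityMeasure κ], ∀ t : ℝ,
      κ (Iic t) = 1 - κ (Ioi t) := by
    intro κ _ t
    rw [← Set.compl_Ioi, measure_compl measurableSet_Ioi (measure_ne_top _ _), measure_univ]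
  have hmeas : ∀ (κ₁ κ₂ : Measure ℝ),
      Measurable fun t : ℝ => κ₁ (Ioi t) * κ₂ (Iic t) + κ₁ (Iic t) * κ₂ (Ioi t) := by
    intro κ₁ κ₂
    have h1 : ∀ κ : Measure ℝ, Measurable fun t : ℝ => κ (Ioi t) := fun κ =>
      Antitone.measurable fun s t hst => measure_mono (Ioi_subset_Ioi hst)
    have h2 : ∀ κ : Measure ℝ, Measurable fun t : ℝ => κ (Iic t) := fun κ =>
      Monotone.measurable fun s t hst => measure_mono (Iic_subset_Iic.mpr hst)
    exact ((h1 κ₁).mul (h2 κ₂)).add ((h2 κ₁).mul (h1 κ₂))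
  have hpt : ∀ t : ℝ, (μ (Ioi t) * μ (Iic t) + μ (Iic t) * μ (Ioi t))
      + (ν (Ioi t) * ν (Iic t) + ν (Iic t) * ν (Ioi t))
      ≤ 2 * (μ (Ioi t) * ν (Iic t) + μ (Iic t) * ν (Ioi t)) := by
    intro t
    rw [hIic μ t, hIic ν t]
    set a := μ (Ioi t)
    set b := ν (Ioi t)
    have ha : a ≤ 1 := prob_le_one
    have hb : b ≤ 1 := prob_le_one
    calc a * (1 - a) + (1 - a) * a + (b * (1 - b) + (1 - b) * b)
        = 2 * (a * (1 - a) + b * (1 - b)) := by ring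
      _ ≤ 2 * (a * (1 - b) + b * (1 - a)) := by
          exact mul_le_mul_right (key_ineq ha hb) 2
      _ = 2 * (a * (1 - b) + (1 - a) * b) := by ring
  have hchain : ENNReal.ofReal (∫ p : ℝ × ℝ, |p.1 - p.2| ∂(μ.prod μ)
        + ∫ p : ℝ × ℝ, |p.1 - p.2| ∂(ν.prod ν))
      ≤ ENNReal.ofReal (2 * ∫ p : ℝ × ℝ, |p.1 - p.2| ∂(μ.prod ν)) := by
    rw [ENNReal.ofReal_add (integral_nonneg fun p => abs_nonneg _)
      (integral_nonneg fun p => abs_nonneg _), hofReal μ μ hμ hμ, hofReal ν ν hν hν,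
      ENNReal.ofReal_mul (by norm_num : (0:ℝ) ≤ 2), hofReal μ ν hμ hν,
      ← lintegral_add_left (hmeas μ μ), ENNReal.ofReal_ofNat,
      ← lintegral_const_mul 2 (hmeas μ ν)]
    exact lintegral_mono hpt
  have hrhs : 0 ≤ 2 * ∫ p : ℝ × ℝ, |p.1 - p.2| ∂(μ.prod ν) := by
    have := integral_nonneg (μ := μ.prod ν) (f := fun p : ℝ × ℝ => |p.1 - p.2|) (fun p => abs_nonneg (p.1 - p.2)); linarith
  exact (ENNReal.ofReal_le_ofReal_iff hrhs).mp hchain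

section Gauss

noncomputable def gaussLike (n : ℕ) : Measure (EuclideanSpace ℝ (Fin (n+1))) :=
  volume.withDensity fun w => ENNReal.ofReal (Real.exp (-‖w‖ ^ 2 / 2))

lemma gaussLike_density_measurable (n : ℕ) :
    Measurable fun w : EuclideanSpace ℝ (Fin (n+1)) =>
      ENNReal.ofReal (Real.exp (-‖w‖ ^ 2 / 2)) :=
  (Real.continuous_exp.comp ((continuous_norm.pow 2).neg.div_const 2)).measurable.ennreal_ofReal

instance (n : ℕ) : SFinite (gaussLike n) := by unfold gaussLike; infer_instance

lemma exp_norm_sq_eq {n : ℕ} (w : EuclideanSpace ℝ (Fin (n+1))) :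
    Real.exp (-‖w‖ ^ 2 / 2) = ∏ j, Real.exp (-(w j) ^ 2 / 2) := by
  rw [← Real.exp_sum]
  congr 1
  rw [EuclideanSpace.norm_eq, Real.sq_sqrt (Finset.sum_nonneg fun i _ => sq_nonneg _)]
  simp only [Real.norm_eq_abs, sq_abs, neg_div, Finset.sum_div, Finset.sum_neg_distrib]

lemma norm_le_sum_abs {n : ℕ} (w : EuclideanSpace ℝ (Fin (n+1))) : ‖w‖ ≤ ∑ i, |w i| := by
  rw [EuclideanSpace.norm_eq]
  have h : ∑ i, ‖w i‖ ^ 2 ≤ (∑ i, |w i|) ^ 2 := by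
    simpa [Real.norm_eq_abs] using
      Finset.sum_sq_le_sq_sum_of_nonneg (s := Finset.univ) (f := fun i => |w i|)
        (fun i _ => abs_nonneg _)
  calc Real.sqrt (∑ i, ‖w i‖ ^ 2) ≤ Real.sqrt ((∑ i, |w i|) ^ 2) := Real.sqrt_le_sqrt h
    _ = ∑ i, |w i| := Real.sqrt_sq (Finset.sum_nonneg fun i _ => abs_nonneg _)

lemma integrable_norm_mul_exp (n : ℕ) :
    Integrable (fun w : EuclideanSpace ℝ (Fin (n+1)) => ‖w‖ * Real.exp (-‖w‖ ^ 2 / 2)) := by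
  classical
  have harg : ∀ x : ℝ, -(1/2 : ℝ) * x ^ 2 = -x ^ 2 / 2 := fun x => by ring
  have hbase1 : Integrable (fun x : ℝ => |x| * Real.exp (-x ^ 2 / 2)) := by
    have h := (integrable_mul_exp_neg_mul_sq (by norm_num : (0:ℝ) < 1/2)).abs
    refine h.congr (Filter.Eventually.of_forall fun x => ?_)
    simp only []
    rw [abs_mul, abs_of_pos (Real.exp_pos _), harg]
  have hbase2 : Integrable (fun x : ℝ => Real.exp (-x ^ 2 / 2)) := by
    have h := integrable_exp_neg_mul_sq (by norm_num : (0:ℝ) < 1/2)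
    refine h.congr (Filter.Eventually.of_forall fun x => ?_)
    simp only []
    rw [harg]
  set g : (Fin (n+1) → ℝ) → ℝ :=
    fun v => ∑ i, ∏ j, (if j = i then |v j| else 1) * Real.exp (-(v j) ^ 2 / 2) with hg
  have hsummand : ∀ i : Fin (n+1),
      Integrable (fun v : Fin (n+1) → ℝ =>
        ∏ j, (if j = i then |v j| else 1) * Real.exp (-(v j) ^ 2 / 2)) := by
    intro i
    refine Integrable.fintype_prod_dep
      (f := fun j x => (if j = i then |x| else 1) * Real.exp (-x ^ 2 / 2)) (fun j => ?_)
    by_cases h : j = i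
    · simpa [h] using hbase1
    · simpa [h] using hbase2
  have hg_int : Integrable g := integrable_finset_sum _ (fun i _ => hsummand i)
  have hmp := EuclideanSpace.volume_preserving_symm_measurableEquiv_toLp (Fin (n+1))
  have hgE : Integrable (g ∘ (MeasurableEquiv.toLp 2 (Fin (n+1) → ℝ)).symm) :=
    (hmp.integrable_comp hg_int.aestronglyMeasurable).mpr hg_int
  refine hgE.mono' (Continuous.aestronglyMeasurable (continuous_norm.mul
    (Real.continuous_exp.comp ((continuous_norm.pow 2).neg.div_const 2)))) ?_
  filter_upwards with w
  rw [Real.norm_eq_abs, abs_of_nonneg (mul_nonneg (norm_nonneg _) (Real.exp_pos _).le)]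
  have hcomp : (g ∘ (MeasurableEquiv.toLp 2 (Fin (n+1) → ℝ)).symm) w
      = ∑ i, ∏ j, (if j = i then |w j| else 1) * Real.exp (-(w j) ^ 2 / 2) := rfl
  rw [hcomp]
  calc ‖w‖ * Real.exp (-‖w‖ ^ 2 / 2) ≤ (∑ i, |w i|) * Real.exp (-‖w‖ ^ 2 / 2) := by
        have := norm_le_sum_abs w
        gcongr
    _ = ∑ i, |w i| * Real.exp (-‖w‖ ^ 2 / 2) := Finset.sum_mul ..
    _ = ∑ i, ∏ j, (if j = i then |w j| else 1) * Real.exp (-(w j) ^ 2 / 2) := by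
        refine Finset.sum_congr rfl fun i _ => ?_
        rw [exp_norm_sq_eq w, Finset.prod_mul_distrib]
        congr 1
        rw [Finset.prod_ite_eq' Finset.univ i (fun j => |w j|)]
        simp

lemma integrable_inner_gaussLike (n : ℕ) (z : EuclideanSpace ℝ (Fin (n+1))) :
    Integrable (fun w => |⟪w, z⟫|) (gaussLike n) := by
  rw [gaussLike, integrable_withDensity_iff (gaussLike_density_measurable n)
    (Filter.Eventually.of_forall fun w => ENNReal.ofReal_lt_top)]
  simp only [ENNReal.toReal_ofReal (Real.exp_pos _).le]
  refine ((integrable_norm_mul_exp n).const_mul ‖z‖).mono'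
    (Continuous.aestronglyMeasurable ((continuous_id.inner continuous_const).abs.mul
      (Real.continuous_exp.comp ((continuous_norm.pow 2).neg.div_const 2)))) ?_
  filter_upwards with w
  rw [Real.norm_eq_abs, abs_of_nonneg (mul_nonneg (abs_nonneg _) (Real.exp_pos _).le)]
  calc |⟪w, z⟫| * Real.exp (-‖w‖ ^ 2 / 2) ≤ (‖w‖ * ‖z‖) * Real.exp (-‖w‖ ^ 2 / 2) := by
        have := abs_real_inner_le_norm w z
        gcongr
    _ = ‖z‖ * (‖w‖ * Real.exp (-‖w‖ ^ 2 / 2)) := by ring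

lemma gaussLike_map (n : ℕ)
    (e : EuclideanSpace ℝ (Fin (n+1)) ≃ₗᵢ[ℝ] EuclideanSpace ℝ (Fin (n+1))) :
    (gaussLike n).map e = gaussLike n := by
  ext s hs
  rw [Measure.map_apply e.continuous.measurable hs, gaussLike,
    withDensity_apply _ (hs.preimage e.continuous.measurable), withDensity_apply _ hs]
  calc ∫⁻ w in ⇑e ⁻¹' s, ENNReal.ofReal (Real.exp (-‖w‖ ^ 2 / 2))
      = ∫⁻ w in ⇑e ⁻¹' s, ENNReal.ofReal (Real.exp (-‖e w‖ ^ 2 / 2)) := by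
        refine lintegral_congr fun w => ?_
        rw [e.norm_map]
    _ = ∫⁻ w in s, ENNReal.ofReal (Real.exp (-‖w‖ ^ 2 / 2)) :=
        e.measurePreserving.setLIntegral_comp_preimage hs (gaussLike_density_measurable n)

lemma gaussLike_inner_eq (n : ℕ) :
    ∃ c : ℝ, 0 < c ∧ ∀ z : EuclideanSpace ℝ (Fin (n+1)),
      ∫ w, |⟪w, z⟫| ∂(gaussLike n) = c * ‖z‖ := by
  classical
  set e₀ : EuclideanSpace ℝ (Fin (n+1)) := EuclideanSpace.single 0 (1:ℝ) with he₀
  have hnorm_e₀ : ‖e₀‖ = 1 := by rw [he₀, EuclideanSpace.norm_single, norm_one]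
  set c : ℝ := ∫ w, |⟪w, e₀⟫| ∂(gaussLike n) with hc
  have hiso : ∀ (e : EuclideanSpace ℝ (Fin (n+1)) ≃ₗᵢ[ℝ] EuclideanSpace ℝ (Fin (n+1)))
      (z : EuclideanSpace ℝ (Fin (n+1))),
      ∫ w, |⟪w, e z⟫| ∂(gaussLike n) = ∫ w, |⟪w, z⟫| ∂(gaussLike n) := by
    intro e z
    conv_lhs => rw [← gaussLike_map n e]
    rw [integral_map e.continuous.measurable.aemeasurable
      (Continuous.aestronglyMeasurable ((continuous_id.inner continuous_const).abs))]
    refine integral_congr_ae (Filter.Eventually.of_forall fun w => ?_)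
    exact congrArg abs (e.inner_map_map w z)
  refine ⟨c, ?_, ?_⟩
  · rw [hc, integral_pos_iff_support_of_nonneg_ae
      (Filter.Eventually.of_forall fun w => abs_nonneg _) (integrable_inner_gaussLike n e₀)]
    have hsupp : (Function.support fun w : EuclideanSpace ℝ (Fin (n+1)) => |⟪w, e₀⟫|)
        = {w | ⟪w, e₀⟫ ≠ 0} := by
      ext w; simp [Function.mem_support, abs_ne_zero]
    rw [hsupp, gaussLike, pos_iff_ne_zero]
    intro h0
    rw [withDensity_apply_eq_zero (gaussLike_density_measurable n)] at h0
    have huniv : {w : EuclideanSpace ℝ (Fin (n+1)) |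
        ENNReal.ofReal (Real.exp (-‖w‖ ^ 2 / 2)) ≠ 0} = Set.univ := by
      ext w; simp [ENNReal.ofReal_eq_zero, not_le, Real.exp_pos]
    rw [huniv, Set.univ_inter] at h0
    have hopen : IsOpen {w : EuclideanSpace ℝ (Fin (n+1)) | ⟪w, e₀⟫ ≠ 0} :=
      isOpen_compl_singleton.preimage (continuous_id.inner continuous_const)
    have hinner : ⟪e₀, e₀⟫ = (1:ℝ) := by
      rw [real_inner_self_eq_norm_sq, hnorm_e₀]; norm_num
    have hne : {w : EuclideanSpace ℝ (Fin (n+1)) | ⟪w, e₀⟫ ≠ 0}.Nonempty := by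
      refine ⟨e₀, ?_⟩
      rw [Set.mem_setOf_eq, hinner]
      norm_num
    exact absurd h0 (hopen.measure_pos volume hne).ne'
  · intro z
    by_cases hz : z = 0
    · simp [hz, inner_zero_right]
    · set u : EuclideanSpace ℝ (Fin (n+1)) := ‖z‖⁻¹ • z with hu_def
      have hu : ‖u‖ = 1 := norm_smul_inv_norm hz
      have he : (Submodule.reflection (ℝ ∙ (u - e₀))ᗮ) u = e₀ := Submodule.reflection_sub (hu.trans hnorm_e₀.symm)
      have h1 : c = ∫ w, |⟪w, u⟫| ∂(gaussLike n) := by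
        rw [hc, ← he, hiso _ u]
      have hzu : z = ‖z‖ • u := by
        rw [hu_def, smul_smul, mul_inv_cancel₀ (norm_ne_zero_iff.mpr hz), one_smul]
      calc ∫ w, |⟪w, z⟫| ∂(gaussLike n) = ∫ w, |⟪w, ‖z‖ • u⟫| ∂(gaussLike n) := by
            rw [← hzu]
        _ = ∫ w, ‖z‖ * |⟪w, u⟫| ∂(gaussLike n) := by
            refine integral_congr_ae (Filter.Eventually.of_forall fun w => ?_)
            show |⟪w, ‖z‖ • u⟫| = ‖z‖ * |⟪w, u⟫|
            rw [real_inner_smul_right, abs_mul, abs_of_nonneg (norm_nonneg z)]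
        _ = ‖z‖ * ∫ w, |⟪w, u⟫| ∂(gaussLike n) := integral_const_mul _ _
        _ = c * ‖z‖ := by rw [← h1, mul_comm]

lemma integrable_inner_sub_prod {n : ℕ} (w : EuclideanSpace ℝ (Fin (n+1)))
    (μ₁ μ₂ : Measure (EuclideanSpace ℝ (Fin (n+1))))
    [IsProbabilityMeasure μ₁] [IsProbabilityMeasure μ₂]
    (h₁ : Integrable (fun x => ‖x‖) μ₁) (h₂ : Integrable (fun x => ‖x‖) μ₂) :
    Integrable (fun p : _ × _ => |⟪w, p.1 - p.2⟫|) (μ₁.prod μ₂) := by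
  refine ((integrable_norm_sub_prod μ₁ μ₂ h₁ h₂).const_mul ‖w‖).mono'
    (Continuous.aestronglyMeasurable
      ((continuous_const.inner (continuous_fst.sub continuous_snd)).abs)) ?_
  filter_upwards with p
  rw [Real.norm_eq_abs, abs_abs]
  exact abs_real_inner_le_norm w _

lemma lintegral_double {n : ℕ} {c : ℝ} (hc0 : 0 ≤ c)
    (hc : ∀ z : EuclideanSpace ℝ (Fin (n+1)), ∫ w, |⟪w, z⟫| ∂(gaussLike n) = c * ‖z‖)
    (μ₁ μ₂ : Measure (EuclideanSpace ℝ (Fin (n+1))))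
    [IsProbabilityMeasure μ₁] [IsProbabilityMeasure μ₂]
    (h₁ : Integrable (fun x => ‖x‖) μ₁) (h₂ : Integrable (fun x => ‖x‖) μ₂) :
    ∫⁻ w, ∫⁻ p : _ × _, ENNReal.ofReal |⟪w, p.1 - p.2⟫| ∂(μ₁.prod μ₂) ∂(gaussLike n)
      = ENNReal.ofReal (c * ∫ p : _ × _, ‖p.1 - p.2‖ ∂(μ₁.prod μ₂)) := by
  have hmeas : Measurable (fun q : EuclideanSpace ℝ (Fin (n+1)) ×
      (EuclideanSpace ℝ (Fin (n+1)) × EuclideanSpace ℝ (Fin (n+1))) =>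
      ENNReal.ofReal |⟪q.1, q.2.1 - q.2.2⟫|) :=
    ((measurable_fst.inner ((measurable_fst.comp measurable_snd).sub
      (measurable_snd.comp measurable_snd))).abs).ennreal_ofReal
  rw [lintegral_lintegral_swap hmeas.aemeasurable]
  calc ∫⁻ p : _ × _, ∫⁻ w, ENNReal.ofReal |⟪w, p.1 - p.2⟫| ∂(gaussLike n) ∂(μ₁.prod μ₂)
      = ∫⁻ p : _ × _, ENNReal.ofReal (c * ‖p.1 - p.2‖) ∂(μ₁.prod μ₂) := by
        refine lintegral_congr fun p => ?_
        rw [← ofReal_integral_eq_lintegral_ofReal (integrable_inner_gaussLike n (p.1 - p.2))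
          (Filter.Eventually.of_forall fun w => abs_nonneg _), hc]
    _ = ENNReal.ofReal (∫ p : _ × _, c * ‖p.1 - p.2‖ ∂(μ₁.prod μ₂)) :=
        (ofReal_integral_eq_lintegral_ofReal ((integrable_norm_sub_prod μ₁ μ₂ h₁ h₂).const_mul c)
          (Filter.Eventually.of_forall fun p => mul_nonneg hc0 (norm_nonneg _))).symm
    _ = ENNReal.ofReal (c * ∫ p : _ × _, ‖p.1 - p.2‖ ∂(μ₁.prod μ₂)) := by
        rw [integral_const_mul]

lemma pointwise_bound {n : ℕ} (P Q : Measure (EuclideanSpace ℝ (Fin (n+1))))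
    [IsProbabilityMeasure P] [IsProbabilityMeasure Q]
    (hP : Integrable (fun x => ‖x‖) P) (hQ : Integrable (fun x => ‖x‖) Q)
    (w : EuclideanSpace ℝ (Fin (n+1))) :
    ∫⁻ p : _ × _, ENNReal.ofReal |⟪w, p.1 - p.2⟫| ∂(P.prod P)
      + ∫⁻ p : _ × _, ENNReal.ofReal |⟪w, p.1 - p.2⟫| ∂(Q.prod Q)
      ≤ 2 * ∫⁻ p : _ × _, ENNReal.ofReal |⟪w, p.1 - p.2⟫| ∂(P.prod Q) := by
  set fw : EuclideanSpace ℝ (Fin (n+1)) → ℝ := fun x => ⟪w, x⟫ with hfw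
  have hfwc : Continuous fw := continuous_const.inner continuous_id
  have hfwm : Measurable fw := hfwc.measurable
  have htrans : ∀ (κ₁ κ₂ : Measure (EuclideanSpace ℝ (Fin (n+1))))
      [IsProbabilityMeasure κ₁] [IsProbabilityMeasure κ₂],
      ∫ p : _ × _, |⟪w, p.1 - p.2⟫| ∂(κ₁.prod κ₂)
        = ∫ q : ℝ × ℝ, |q.1 - q.2| ∂((κ₁.map fw).prod (κ₂.map fw)) := by
    intro κ₁ κ₂ _ _
    calc ∫ p : _ × _, |⟪w, p.1 - p.2⟫| ∂(κ₁.prod κ₂)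
        = ∫ p : _ × _, |fw p.1 - fw p.2| ∂(κ₁.prod κ₂) := by
          refine integral_congr_ae (Filter.Eventually.of_forall fun p => ?_)
          show |⟪w, p.1 - p.2⟫| = |fw p.1 - fw p.2|
          rw [hfw, inner_sub_right]
      _ = ∫ q : ℝ × ℝ, |q.1 - q.2| ∂((κ₁.prod κ₂).map (Prod.map fw fw)) := by
          exact (integral_map (hfwm.prodMap hfwm).aemeasurable
            (Continuous.aestronglyMeasurable ((continuous_fst.sub continuous_snd).abs))).symm
      _ = ∫ q : ℝ × ℝ, |q.1 - q.2| ∂((κ₁.map fw).prod (κ₂.map fw)) := by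
          rw [Measure.map_prod_map _ _ hfwm hfwm]
  have hmap_int : ∀ (κ : Measure (EuclideanSpace ℝ (Fin (n+1)))) [IsProbabilityMeasure κ],
      Integrable (fun x => ‖x‖) κ → Integrable (fun x : ℝ => ‖x‖) (κ.map fw) := by
    intro κ _ hk
    rw [integrable_map_measure continuous_norm.aestronglyMeasurable hfwm.aemeasurable]
    refine (hk.const_mul ‖w‖).mono' (hfwc.norm.aestronglyMeasurable) ?_
    filter_upwards with x
    simp only [Function.comp_apply, norm_norm, Real.norm_eq_abs, abs_abs]
    exact abs_real_inner_le_norm w x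
  haveI : IsProbabilityMeasure (P.map fw) := Measure.isProbabilityMeasure_map hfwm.aemeasurable
  haveI : IsProbabilityMeasure (Q.map fw) := Measure.isProbabilityMeasure_map hfwm.aemeasurable
  have h1D := oneDim_energy (P.map fw) (Q.map fw) (hmap_int P hP) (hmap_int Q hQ)
  have hof : ∀ (κ₁ κ₂ : Measure (EuclideanSpace ℝ (Fin (n+1))))
      [IsProbabilityMeasure κ₁] [IsProbabilityMeasure κ₂],
      Integrable (fun x => ‖x‖) κ₁ → Integrable (fun x => ‖x‖) κ₂ →
      ∫⁻ p : _ × _, ENNReal.ofReal |⟪w, p.1 - p.2⟫| ∂(κ₁.prod κ₂)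
        = ENNReal.ofReal (∫ p : _ × _, |⟪w, p.1 - p.2⟫| ∂(κ₁.prod κ₂)) := by
    intro κ₁ κ₂ _ _ h₁ h₂
    exact (ofReal_integral_eq_lintegral_ofReal (integrable_inner_sub_prod w κ₁ κ₂ h₁ h₂)
      (Filter.Eventually.of_forall fun p => abs_nonneg _)).symm
  rw [hof P P hP hP, hof Q Q hQ hQ, hof P Q hP hQ,
    ← ENNReal.ofReal_add (integral_nonneg fun p => abs_nonneg _)
      (integral_nonneg fun p => abs_nonneg _)]
  have h2 : (2 : ℝ≥0∞) * ENNReal.ofReal (∫ p : _ × _, |⟪w, p.1 - p.2⟫| ∂(P.prod Q))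
      = ENNReal.ofReal (2 * ∫ p : _ × _, |⟪w, p.1 - p.2⟫| ∂(P.prod Q)) := by
    rw [ENNReal.ofReal_mul (by norm_num : (0:ℝ) ≤ 2), ENNReal.ofReal_ofNat]
  rw [h2]
  apply ENNReal.ofReal_le_ofReal
  rw [htrans P P, htrans Q Q, htrans P Q]
  exact h1D

end Gauss


/-- For probability measures `P, Q` on `ℝ^d` with finite first moments, the energy distance
`2E‖X-Y‖ - E‖X-X'‖ - E‖Y-Y'‖` (for mutually independent `X, X' ~ P`, `Y, Y' ~ Q`)
is nonnegative. -/
theorem energyDist_nonneg {d : ℕ} (P Q : Measure (EuclideanSpace ℝ (Fin d)))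
    [IsProbabilityMeasure P] [IsProbabilityMeasure Q]
    (hP : Integrable (fun x => ‖x‖) P) (hQ : Integrable (fun y => ‖y‖) Q) :
    0 ≤ energyDist P Q := by
  rcases eq_or_ne d 0 with rfl | hd
  · have hz : ∀ x y : EuclideanSpace ℝ (Fin 0), ‖x - y‖ = 0 := fun x y => by
      rw [Subsingleton.elim x y, sub_self, norm_zero]
    simp [energyDist, hz]
  · obtain ⟨n, rfl⟩ := Nat.exists_eq_succ_of_ne_zero hd
    obtain ⟨c, hcpos, hc⟩ := gaussLike_inner_eq n
    have hPQ := integrable_norm_sub_prod P Q hP hQ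
    have hPP := integrable_norm_sub_prod P P hP hP
    have hQQ := integrable_norm_sub_prod Q Q hQ hQ
    have e1 : ∫ x, ∫ y, ‖x - y‖ ∂Q ∂P = ∫ p : _ × _, ‖p.1 - p.2‖ ∂(P.prod Q) :=
      (integral_prod _ hPQ).symm
    have e2 : ∫ x, ∫ y, ‖x - y‖ ∂P ∂P = ∫ p : _ × _, ‖p.1 - p.2‖ ∂(P.prod P) :=
      (integral_prod _ hPP).symm
    have e3 : ∫ x, ∫ y, ‖x - y‖ ∂Q ∂Q = ∫ p : _ × _, ‖p.1 - p.2‖ ∂(Q.prod Q) :=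
      (integral_prod _ hQQ).symm
    rw [energyDist, e1, e2, e3]
    set T1 := ∫ p : _ × _, ‖p.1 - p.2‖ ∂(P.prod Q) with hT1
    set T2 := ∫ p : _ × _, ‖p.1 - p.2‖ ∂(P.prod P) with hT2
    set T3 := ∫ p : _ × _, ‖p.1 - p.2‖ ∂(Q.prod Q) with hT3
    have hT1n : 0 ≤ T1 := integral_nonneg fun p => norm_nonneg _
    have hT2n : 0 ≤ T2 := integral_nonneg fun p => norm_nonneg _
    have hT3n : 0 ≤ T3 := integral_nonneg fun p => norm_nonneg _
    have hmeasW : ∀ (κ₁ κ₂ : Measure (EuclideanSpace ℝ (Fin (n+1))))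
        [IsProbabilityMeasure κ₁] [IsProbabilityMeasure κ₂],
        Measurable fun w : EuclideanSpace ℝ (Fin (n+1)) =>
          ∫⁻ p : _ × _, ENNReal.ofReal |⟪w, p.1 - p.2⟫| ∂(κ₁.prod κ₂) := by
      intro κ₁ κ₂ _ _
      exact Measurable.lintegral_prod_right'
        (((measurable_fst.inner ((measurable_fst.comp measurable_snd).sub
          (measurable_snd.comp measurable_snd))).abs).ennreal_ofReal)
    have HPP := lintegral_double hcpos.le hc P P hP hP
    have HQQ := lintegral_double hcpos.le hc Q Q hQ hQ
    have HPQ := lintegral_double hcpos.le hc P Q hP hQ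
    have hchain : ENNReal.ofReal (c * T2) + ENNReal.ofReal (c * T3)
        ≤ ENNReal.ofReal (2 * (c * T1)) := by
      rw [← HPP, ← HQQ]
      calc (∫⁻ w, ∫⁻ p : _ × _, ENNReal.ofReal |⟪w, p.1 - p.2⟫| ∂(P.prod P) ∂(gaussLike n))
            + ∫⁻ w, ∫⁻ p : _ × _, ENNReal.ofReal |⟪w, p.1 - p.2⟫| ∂(Q.prod Q) ∂(gaussLike n)
          = ∫⁻ w, ((∫⁻ p : _ × _, ENNReal.ofReal |⟪w, p.1 - p.2⟫| ∂(P.prod P))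
            + ∫⁻ p : _ × _, ENNReal.ofReal |⟪w, p.1 - p.2⟫| ∂(Q.prod Q)) ∂(gaussLike n) :=
            (lintegral_add_left (hmeasW P P) _).symm
        _ ≤ ∫⁻ w, 2 * ∫⁻ p : _ × _, ENNReal.ofReal |⟪w, p.1 - p.2⟫| ∂(P.prod Q)
            ∂(gaussLike n) := lintegral_mono fun w => pointwise_bound P Q hP hQ w
        _ = 2 * ∫⁻ w, ∫⁻ p : _ × _, ENNReal.ofReal |⟪w, p.1 - p.2⟫| ∂(P.prod Q)
            ∂(gaussLike n) := lintegral_const_mul 2 (hmeasW P Q)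
        _ = 2 * ENNReal.ofReal (c * T1) := by rw [HPQ]
        _ = ENNReal.ofReal (2 * (c * T1)) := by
            rw [ENNReal.ofReal_mul (by norm_num : (0:ℝ) ≤ 2), ENNReal.ofReal_ofNat]
    have hreal : c * T2 + c * T3 ≤ 2 * (c * T1) := by
      rw [← ENNReal.ofReal_add (mul_nonneg hcpos.le hT2n) (mul_nonneg hcpos.le hT3n)] at hchain
      exact (ENNReal.ofReal_le_ofReal_iff (by positivity)).mp hchain
    have hfin : T2 + T3 ≤ 2 * T1 := by
      have h := (mul_le_mul_iff_right₀ hcpos).mp (by linarith : c * (T2 + T3) ≤ c * (2 * T1))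
      linarith
    linarith
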